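/- If H is a bialgebra over a commutative ring R with a structural basis, then every primitive element of H is liftable: in fact each basis primitive Z_{ε_i} is lifted by the group-like series Σ_{n≥0} Z_{nε_i} xⁿ, and liftable elements form an R-module. -/

import Mathlib

open TensorProduct Coalgebra

variable {R H I : Type*} [DecidableEq I] [CommRing R] [Ring H] [Bialgebra R H]

/-- `x` is primitive: `Δ(x) = x ⊗ 1 + 1 ⊗ x`. -/
def IsPrimitive (R : Type*) {H : Type*} [CommRing R] [Ring H] [Bialgebra R H] (x : H) : Prop :=
  comul (R := R) x = x ⊗ₜ[R] 1 + 1 ⊗ₜ[R] x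

/-- `x` is liftable. -/
def Liftable (R : Type*) {H : Type*} [CommRing R] [Ring H] [Bialgebra R H] (x : H) : Prop :=
  ∃ a : ℕ → H, a 0 = 1 ∧ a 1 = x ∧
    ∀ n, comul (R := R) (a n) = ∑ m ∈ Finset.range (n + 1), a m ⊗ₜ[R] a (n - m)


section Helpers
open Finset PowerSeries

lemma split_single {I : Type*} [DecidableEq I] {i : I} {n : ℕ} {u v : I →₀ ℕ}
    (h : u + v = Finsupp.single i n) :
    u = Finsupp.single i (u i) ∧ u i ≤ n ∧ v = Finsupp.single i (n - u i) := by
  have huv : ∀ a, u a + v a = (Finsupp.single i n) a := fun a => by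
    rw [← h]; rfl
  have hui : u i + v i = n := by simpa using huv i
  have h0 : ∀ a, a ≠ i → u a = 0 ∧ v a = 0 := by
    intro a ha
    have := huv a
    rw [Finsupp.single_apply, if_neg (fun h' => ha h'.symm)] at this
    omega
  refine ⟨?_, by omega, ?_⟩
  · ext a
    rcases eq_or_ne a i with rfl | ha
    · simp
    · rw [Finsupp.single_apply, if_neg (fun h' => ha h'.symm)]; exact (h0 a ha).1
  · ext a
    rcases eq_or_ne a i with rfl | ha
    · simp; omega
    · rw [Finsupp.single_apply, if_neg (fun h' => ha h'.symm)]; exact (h0 a ha).2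

lemma sum_antidiagonal_single {I : Type*} [DecidableEq I] {M : Type*} [AddCommMonoid M]
    (i : I) (n : ℕ) (f : (I →₀ ℕ) → (I →₀ ℕ) → M) :
    ∑ p ∈ Finset.HasAntidiagonal.antidiagonal (Finsupp.single i n), f p.1 p.2 =
      ∑ m ∈ Finset.range (n + 1), f (Finsupp.single i m) (Finsupp.single i (n - m)) := by
  refine Finset.sum_nbij' (fun p => p.1 i) (fun m => (Finsupp.single i m, Finsupp.single i (n - m)))
    ?_ ?_ ?_ ?_ ?_
  · intro p hp
    obtain ⟨-, h2, -⟩ := split_single (Finset.HasAntidiagonal.mem_antidiagonal.1 hp)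
    simpa using Nat.lt_succ_of_le h2
  · intro m hm
    rw [Finset.HasAntidiagonal.mem_antidiagonal]
    ext a
    rcases eq_or_ne a i with rfl | ha
    · simp at hm ⊢; omega
    · simp [Finsupp.single_apply, if_neg (ha ∘ Eq.symm)]
  · intro p hp
    obtain ⟨h1, h2, h3⟩ := split_single (Finset.HasAntidiagonal.mem_antidiagonal.1 hp)
    exact Prod.ext h1.symm h3.symm
  · intro m hm; simp
  · intro p hp
    obtain ⟨h1, h2, h3⟩ := split_single (Finset.HasAntidiagonal.mem_antidiagonal.1 hp)
    rw [← h1, ← h3]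

lemma commute_powerSeries {S : Type*} [Ring S] {F G : PowerSeries S}
    (h : ∀ i j, Commute (PowerSeries.coeff i F) (PowerSeries.coeff j G)) :
    Commute F G := by
  rw [Commute, SemiconjBy]
  ext n
  rw [coeff_mul, coeff_mul,
    ← Finset.Nat.sum_antidiagonal_swap (f := fun p => PowerSeries.coeff p.1 G * PowerSeries.coeff p.2 F)]
  exact Finset.sum_congr rfl fun p _ => h p.1 p.2

variable {R H : Type*} [CommRing R] [Ring H] [Bialgebra R H]

noncomputable abbrev ψ : H →+* H ⊗[R] H := (Bialgebra.comulAlgHom R H).toRingHom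
noncomputable abbrev φ₁ : H →+* H ⊗[R] H := (Algebra.TensorProduct.includeLeft (S := R)).toRingHom
noncomputable abbrev φ₂ : H →+* H ⊗[R] H := (Algebra.TensorProduct.includeRight (R := R) (A := H) (B := H)).toRingHom

lemma coeff_prod_phi (s t : ℕ → H) (n : ℕ) :
    PowerSeries.coeff n (PowerSeries.map (φ₁ (R := R)) (mk s) * PowerSeries.map φ₂ (mk t)) =
      ∑ m ∈ Finset.range (n + 1), s m ⊗ₜ[R] t (n - m) := by
  rw [coeff_mul, Finset.Nat.sum_antidiagonal_eq_sum_range_succ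
    (f := fun i j => (PowerSeries.coeff i (PowerSeries.map (φ₁ (R := R)) (mk s))) *
      (PowerSeries.coeff j (PowerSeries.map φ₂ (mk t))))]
  refine Finset.sum_congr rfl fun m _ => ?_
  simp [Algebra.TensorProduct.tmul_mul_tmul]

lemma groupLike_iff (s : ℕ → H) :
    (∀ n, comul (R := R) (s n) = ∑ m ∈ Finset.range (n + 1), s m ⊗ₜ[R] s (n - m)) ↔
      PowerSeries.map (ψ (R := R)) (mk s) =
        PowerSeries.map φ₁ (mk s) * PowerSeries.map φ₂ (mk s) := by
  constructor
  · intro h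
    ext n
    rw [coeff_prod_phi, PowerSeries.coeff_map, coeff_mk]
    exact h n
  · intro h n
    have := congrArg (PowerSeries.coeff n) h
    rwa [coeff_prod_phi, PowerSeries.coeff_map, coeff_mk] at this

lemma liftable_zero : Liftable R (0 : H) := by
  refine ⟨fun n => if n = 0 then 1 else 0, if_pos rfl, if_neg one_ne_zero, fun n => ?_⟩
  show comul (if n = 0 then (1 : H) else 0) =
    ∑ m ∈ Finset.range (n + 1),
      (if m = 0 then (1 : H) else 0) ⊗ₜ[R] (if n - m = 0 then (1 : H) else 0)
  rcases Nat.eq_zero_or_pos n with rfl | hn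
  · simp [Algebra.TensorProduct.one_def]
  · rw [if_neg hn.ne', map_zero]
    symm
    refine Finset.sum_eq_zero fun m hm => ?_
    rcases Nat.eq_zero_or_pos m with rfl | hm'
    · rw [if_neg (show n - 0 ≠ 0 by omega), tmul_zero]
    · rw [if_neg hm'.ne', zero_tmul]

lemma liftable_smul (r : R) {x : H} (hx : Liftable R x) : Liftable R (r • x) := by
  obtain ⟨a, ha0, ha1, ha⟩ := hx
  refine ⟨fun n => r ^ n • a n, by simp [ha0], by simp [ha1], fun n => ?_⟩
  show comul (r ^ n • a n) = ∑ m ∈ Finset.range (n + 1),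
    (r ^ m • a m) ⊗ₜ[R] (r ^ (n - m) • a (n - m))
  rw [map_smul, ha, Finset.smul_sum]
  refine Finset.sum_congr rfl fun m hm => ?_
  rw [tmul_smul, ← smul_tmul', smul_smul, ← pow_add,
    Nat.sub_add_cancel (Nat.lt_succ_iff.1 (Finset.mem_range.1 hm))]

lemma liftable_add {x y : H} (hx : Liftable R x) (hy : Liftable R y) : Liftable R (x + y) := by
  obtain ⟨a, ha0, ha1, ha⟩ := hx
  obtain ⟨b, hb0, hb1, hb⟩ := hy
  set c : ℕ → H := fun n => ∑ k ∈ Finset.range (n + 1), a k * b (n - k) with hcdef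
  have h1 : (mk c : PowerSeries H) = mk a * mk b := by
    ext n
    simp only [coeff_mk, coeff_mul]
    rw [Finset.Nat.sum_antidiagonal_eq_sum_range_succ (fun i j => a i * b j)]
  have hcomm : Commute (PowerSeries.map (φ₂ (R := R)) (mk a)) (PowerSeries.map φ₁ (mk b)) := by
    refine commute_powerSeries fun i j => ?_
    simp only [PowerSeries.coeff_map, coeff_mk]
    show Commute ((1 : H) ⊗ₜ[R] a i) (b j ⊗ₜ[R] 1)
    rw [Commute, SemiconjBy, Algebra.TensorProduct.tmul_mul_tmul,
      Algebra.TensorProduct.tmul_mul_tmul, one_mul, mul_one, one_mul, mul_one]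
  have hser : PowerSeries.map (ψ (R := R)) (mk c) =
      PowerSeries.map φ₁ (mk c) * PowerSeries.map φ₂ (mk c) := by
    rw [h1, map_mul, map_mul, map_mul, (groupLike_iff a).1 ha, (groupLike_iff b).1 hb]
    exact Commute.mul_mul_mul_comm hcomm _ _
  refine ⟨c, ?_, ?_, (groupLike_iff c).2 hser⟩
  · show ∑ k ∈ Finset.range 1, a k * b (0 - k) = 1
    simp [ha0, hb0]
  · show ∑ k ∈ Finset.range 2, a k * b (1 - k) = x + y
    rw [Finset.sum_range_succ, Finset.sum_range_one]
    simp [ha0, ha1, hb0, hb1, add_comm]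

end Helpers

section Helpers2
open Finset

lemma reprA (Z : Module.Basis (I →₀ ℕ) R H)
    (hZ : ∀ α : I →₀ ℕ,
      comul (R := R) (Z α) = ∑ p ∈ Finset.HasAntidiagonal.antidiagonal α, Z p.1 ⊗ₜ[R] Z p.2)
    (β γ : I →₀ ℕ) (x : H) :
    (Z.tensorProduct Z).repr (comul (R := R) x) (β, γ) = Z.repr x (β + γ) := by
  have h : (Finsupp.lapply (β, γ) ∘ₗ (Z.tensorProduct Z).repr.toLinearMap ∘ₗ
      (comul (R := R) : H →ₗ[R] H ⊗[R] H)) =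
      (Finsupp.lapply (β + γ) ∘ₗ Z.repr.toLinearMap) := by
    refine Module.Basis.ext Z fun α => ?_
    simp only [LinearMap.coe_comp, Function.comp_apply, LinearEquiv.coe_coe,
      Finsupp.lapply_apply, Module.Basis.repr_self]
    rw [hZ α, map_sum, Finsupp.finset_sum_apply]
    have : ∀ p : (I →₀ ℕ) × (I →₀ ℕ),
        (Z.tensorProduct Z).repr (Z p.1 ⊗ₜ[R] Z p.2) (β, γ) =
          if p = (β, γ) then 1 else 0 := by
      intro p
      rw [← Module.Basis.tensorProduct_apply' Z Z p, Module.Basis.repr_self, Finsupp.single_apply]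
    rw [Finset.sum_congr rfl fun p _ => this p, Finset.sum_ite_eq' _ (β, γ) (fun _ => (1 : R))]
    simp [Finset.HasAntidiagonal.mem_antidiagonal, Finsupp.single_apply, eq_comm]
  exact LinearMap.congr_fun h x

lemma reprB (Z : Module.Basis (I →₀ ℕ) R H) (hZ0 : Z 0 = 1) (β γ : I →₀ ℕ) (x : H) :
    (Z.tensorProduct Z).repr (x ⊗ₜ[R] (1 : H)) (β, γ) =
      if γ = 0 then Z.repr x β else 0 := by
  rw [← hZ0]
  have key : ∀ α, (Z.tensorProduct Z).repr (Z α ⊗ₜ[R] Z 0) (β, γ) =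
      if γ = 0 then Z.repr (Z α) β else 0 := by
    intro α
    rw [← Module.Basis.tensorProduct_apply Z Z α 0, Module.Basis.repr_self, Module.Basis.repr_self,
      Finsupp.single_apply, Finsupp.single_apply]
    by_cases hγ : γ = 0 <;> simp [Prod.ext_iff, hγ, eq_comm, and_comm]
  have h : (Finsupp.lapply (β, γ) ∘ₗ (Z.tensorProduct Z).repr.toLinearMap ∘ₗ
      (TensorProduct.mk R H H).flip (Z 0)) =
      (if γ = 0 then (1 : R) else 0) • (Finsupp.lapply β ∘ₗ Z.repr.toLinearMap) := by
    refine Module.Basis.ext Z fun α => ?_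
    simp only [LinearMap.coe_comp, Function.comp_apply, LinearEquiv.coe_coe,
      Finsupp.lapply_apply, LinearMap.smul_apply, LinearMap.flip_apply, mk_apply]
    rw [key α]
    by_cases hγ : γ = 0 <;> simp [hγ]
  have := LinearMap.congr_fun h x
  simp only [LinearMap.coe_comp, Function.comp_apply, LinearEquiv.coe_coe,
    Finsupp.lapply_apply, LinearMap.smul_apply, LinearMap.flip_apply, mk_apply] at this
  rw [this]
  by_cases hγ : γ = 0 <;> simp [hγ]

lemma reprC (Z : Module.Basis (I →₀ ℕ) R H) (hZ0 : Z 0 = 1) (β γ : I →₀ ℕ) (x : H) :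
    (Z.tensorProduct Z).repr ((1 : H) ⊗ₜ[R] x) (β, γ) =
      if β = 0 then Z.repr x γ else 0 := by
  rw [← hZ0]
  have key : ∀ α, (Z.tensorProduct Z).repr (Z 0 ⊗ₜ[R] Z α) (β, γ) =
      if β = 0 then Z.repr (Z α) γ else 0 := by
    intro α
    rw [← Module.Basis.tensorProduct_apply Z Z 0 α, Module.Basis.repr_self, Module.Basis.repr_self,
      Finsupp.single_apply, Finsupp.single_apply]
    by_cases hβ : β = 0 <;> simp [Prod.ext_iff, hβ, eq_comm, and_comm]
  have h : (Finsupp.lapply (β, γ) ∘ₗ (Z.tensorProduct Z).repr.toLinearMap ∘ₗ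
      (TensorProduct.mk R H H) (Z 0)) =
      (if β = 0 then (1 : R) else 0) • (Finsupp.lapply γ ∘ₗ Z.repr.toLinearMap) := by
    refine Module.Basis.ext Z fun α => ?_
    simp only [LinearMap.coe_comp, Function.comp_apply, LinearEquiv.coe_coe,
      Finsupp.lapply_apply, LinearMap.smul_apply, mk_apply]
    rw [key α]
    by_cases hβ : β = 0 <;> simp [hβ]
  have := LinearMap.congr_fun h x
  simp only [LinearMap.coe_comp, Function.comp_apply, LinearEquiv.coe_coe,
    Finsupp.lapply_apply, LinearMap.smul_apply, mk_apply] at this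
  rw [this]
  by_cases hβ : β = 0 <;> simp [hβ]

lemma prim_mem_span (Z : Module.Basis (I →₀ ℕ) R H) (hZ0 : Z 0 = 1)
    (hZ : ∀ α : I →₀ ℕ,
      comul (R := R) (Z α) = ∑ p ∈ Finset.HasAntidiagonal.antidiagonal α, Z p.1 ⊗ₜ[R] Z p.2)
    (x : H) (hx : comul (R := R) x = x ⊗ₜ[R] 1 + 1 ⊗ₜ[R] x) :
    x ∈ Submodule.span R (Set.range fun i : I => Z (Finsupp.single i 1)) := by
  have key : ∀ β γ : I →₀ ℕ, Z.repr x (β + γ) =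
      (if γ = 0 then Z.repr x β else 0) + (if β = 0 then Z.repr x γ else 0) := by
    intro β γ
    have h := congrArg (fun t => (Z.tensorProduct Z).repr t (β, γ)) hx
    simp only [map_add, Finsupp.add_apply] at h
    rw [reprA Z hZ, reprB Z hZ0, reprC Z hZ0] at h
    exact h
  have h0 : Z.repr x 0 = 0 := by
    have := key 0 0
    simp only [add_zero, if_pos rfl] at this
    exact (left_eq_add.1 this)
  have hsupp : ∀ α ∈ (Z.repr x).support, ∃ i, α = Finsupp.single i 1 := by
    intro α hα
    by_contra hno
    push_neg at hno
    have hne : Z.repr x α ≠ 0 := Finsupp.mem_support_iff.1 hα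
    rcases eq_or_ne α 0 with rfl | hα0
    · exact hne h0
    obtain ⟨i, hi⟩ := Finsupp.support_nonempty_iff.2 hα0
    have hi1 : 1 ≤ α i := Nat.one_le_iff_ne_zero.2 (Finsupp.mem_support_iff.1 hi)
    set β := Finsupp.single i 1 with hβ
    have hle : β ≤ α := by
      rw [hβ, Finsupp.single_le_iff]
      exact hi1
    have hsum : β + (α - β) = α := add_tsub_cancel_of_le hle
    have hβ0 : β ≠ 0 := by simp [hβ, Finsupp.single_eq_zero]
    have hγ0 : α - β ≠ 0 := by
      intro h
      apply hno i
      rw [← hsum, h, add_zero]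
    have := key β (α - β)
    rw [hsum, if_neg hγ0, if_neg hβ0, add_zero] at this
    exact hne this
  rw [← Z.linearCombination_repr x, Finsupp.linearCombination_apply]
  refine Submodule.finsuppSum_mem R
    (Submodule.span R (Set.range fun i : I => Z (Finsupp.single i 1)))
    (Z.repr x) (fun α r => r • Z α) ?_
  intro α hα
  obtain ⟨i, rfl⟩ := hsupp α (Finsupp.mem_support_iff.2 hα)
  exact Submodule.smul_mem _ _ (Submodule.subset_span ⟨i, rfl⟩)

end Helpers2

/-- Lemma 2.6: if a bialgebra `H` has a structural basis `{Z_α}` then every primitive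
element of `H` is liftable; indeed each basis primitive `Z_{ε_i}` is lifted by the
group-like series `∑ₙ Z_{n·ε_i} xⁿ`, and the liftable elements form an `R`-module. -/
theorem primitive_liftable_of_structural_basis
    (Z : Module.Basis (I →₀ ℕ) R H) (hZ0 : Z 0 = 1)
    (hZ : ∀ α : I →₀ ℕ,
      comul (R := R) (Z α) = ∑ p ∈ Finset.HasAntidiagonal.antidiagonal α, Z p.1 ⊗ₜ[R] Z p.2) :
    (∀ i : I, ∀ n : ℕ,
      comul (R := R) (Z (Finsupp.single i n)) =
        ∑ m ∈ Finset.range (n + 1),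
          Z (Finsupp.single i m) ⊗ₜ[R] Z (Finsupp.single i (n - m))) ∧
    (∀ i : I, Liftable R (Z (Finsupp.single i 1))) ∧
    (∃ M : Submodule R H, ∀ x : H, x ∈ M ↔ Liftable R x) ∧
    ∀ x : H, IsPrimitive R x → Liftable R x := by
  have P1 : ∀ i : I, ∀ n : ℕ,
      comul (R := R) (Z (Finsupp.single i n)) =
        ∑ m ∈ Finset.range (n + 1),
          Z (Finsupp.single i m) ⊗ₜ[R] Z (Finsupp.single i (n - m)) := by
    intro i n
    rw [hZ, sum_antidiagonal_single i n (fun u v => Z u ⊗ₜ[R] Z v)]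
  have P2 : ∀ i : I, Liftable R (Z (Finsupp.single i 1)) := by
    intro i
    exact ⟨fun n => Z (Finsupp.single i n), by simp only [Finsupp.single_zero, hZ0], rfl, P1 i⟩
  refine ⟨P1, P2, ⟨⟨⟨⟨{x | Liftable R x}, fun h1 h2 => liftable_add h1 h2⟩,
      liftable_zero⟩, fun r {x} h => liftable_smul r h⟩, fun x => Iff.rfl⟩, ?_⟩
  intro x hx
  have hmem := prim_mem_span Z hZ0 hZ x hx
  let M : Submodule R H := ⟨⟨⟨{x | Liftable R x}, fun h1 h2 => liftable_add h1 h2⟩,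
      liftable_zero⟩, fun r {x} h => liftable_smul r h⟩
  have hle : Submodule.span R (Set.range fun i : I => Z (Finsupp.single i 1)) ≤ M := by
    rw [Submodule.span_le]
    rintro _ ⟨i, rfl⟩
    exact P2 i
  exact hle hmem
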